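/- arXiv:2102.10321 — 5 statements merged into one kernel-verified Lean document; each statement's English description precedes it below -/
import Mathlib

section
/- Let F be a finite field of characteristic 2 with |F| ≥ 4, and let k1, k2 ∈ F. For all nonzero e_i, e_j ∈ F there exist s, t, x1, u ∈ F with x1 ≠ k1 and x1 + e_i ≠ k1 such that u·(x1 + k1) = s·x1 + t + k2 and (u + e_j)·(x1 + e_i + k1) = s·(x1 + e_i) + t + k2. (Equivalently, the authentication map a(x) = (s·x + t + k2)/(x + k1) satisfies a(x1 + e_i) = a(x1) + e_j, i.e. the projective-plane authentication scheme over a field of characteristic 2 is complete in the sense of Kam and Davida.) -/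
/-- Completeness of the projective-plane authentication scheme over a field of
characteristic 2 (Kam–Davida): for any key `(k₁, k₂)` and any nonzero "bit flips"
`ei, ej`, there are parameters `s, t` of the message line and a message coordinate `x₁`
(with `x₁ ≠ k₁` and `x₁ + ei ≠ k₁`) and an authenticator `u` such that
`u = a(x₁)` and `u + ej = a(x₁ + ei)`, where `a(x) = (s·x + t + k₂)/(x + k₁)`;
i.e. flipping bit `i` of the input flips bit `j` of the output. -/
theorem projective_authentication_complete (F : Type*) [Field F] [Fintype F] [CharP F 2]
    (hcard : 4 ≤ Fintype.card F) (k₁ k₂ : F) :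
    ∀ ei ej : F, ei ≠ 0 → ej ≠ 0 →
      ∃ s t x₁ u : F, x₁ ≠ k₁ ∧ x₁ + ei ≠ k₁ ∧
        u * (x₁ + k₁) = s * x₁ + t + k₂ ∧
        (u + ej) * (x₁ + ei + k₁) = s * (x₁ + ei) + t + k₂ := by
  intro ei ej hei hej
  have h2 : (2 : F) = 0 := by
    have := CharP.cast_eq_zero F 2; exact_mod_cast this
  -- find x₁ avoiding k₁ and k₁ + ei
  classical
  have hlt : ({k₁, k₁ + ei} : Finset F).card < Fintype.card F := by
    calc ({k₁, k₁ + ei} : Finset F).card ≤ 2 := (Finset.card_insert_le _ _).trans (by simp)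
    _ < 4 := by norm_num
    _ ≤ Fintype.card F := hcard
  have hex : ∃ x : F, x ∉ ({k₁, k₁ + ei} : Finset F) := by
    by_contra h
    push_neg at h
    have := Finset.eq_univ_iff_forall.mpr h
    rw [this, Finset.card_univ] at hlt
    exact lt_irrefl _ hlt
  obtain ⟨x₁, hx⟩ := hex
  simp only [Finset.mem_insert, Finset.mem_singleton, not_or] at hx
  obtain ⟨hx1, hx2⟩ := hx
  set s := ej * (x₁ + ei + k₁) * ei⁻¹ with hs
  refine ⟨s, s * x₁ + k₂, x₁, 0, hx1, ?_, ?_, ?_⟩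
  · intro h
    apply hx2
    have : x₁ = k₁ + ei := by linear_combination h - ei * h2
    exact this
  · linear_combination (-(s * x₁ + k₂)) * h2
  · have : ei ≠ 0 := hei
    have hsei : s * ei = ej * (x₁ + ei + k₁) := by
      rw [hs, mul_assoc, inv_mul_cancel₀ this, mul_one]
    linear_combination -hsei - (s * x₁ + k₂) * h2
end

section
/- In a finite Möbius plane in which every circle contains exactly q+1 points (q ≥ 2), the total number of points is q² + 1. -/
/-- A finite Möbius plane: a finite set of points `S` with a set of subsets of `S` called
circles such that (M1) any three pairwise distinct points lie on exactly one circle,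
(M2) for every circle `A`, every `a ∈ A` and every `b ∉ A` there is exactly one circle
`B` with `a, b ∈ B` and `A ∩ B = {a}`, and (M3) `|S| ≥ 4` and there are four pairwise
distinct points not lying on a common circle. -/
structure FiniteMoebiusPlane (S : Type*) [Fintype S] where
  circles : Set (Set S)
  M1 : ∀ a b c : S, a ≠ b → b ≠ c → a ≠ c →
    ∃! C : Set S, C ∈ circles ∧ a ∈ C ∧ b ∈ C ∧ c ∈ C
  M2 : ∀ A ∈ circles, ∀ a ∈ A, ∀ b ∉ A,
    ∃! B : Set S, B ∈ circles ∧ a ∈ B ∧ b ∈ B ∧ A ∩ B = {a}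
  M3 : 4 ≤ Fintype.card S ∧ ∃ p : Fin 4 → S, Function.Injective p ∧
    ∀ C ∈ circles, ¬ ∀ i : Fin 4, p i ∈ C

/-- In a finite Möbius plane in which every circle contains exactly `q + 1` points
(`q ≥ 2`), the total number of points is `q² + 1`. -/
theorem moebius_card_points (S : Type*) [Fintype S]
    (MP : FiniteMoebiusPlane S) (q : ℕ) (hq : 2 ≤ q)
    (hcirc : ∀ C ∈ MP.circles, Nat.card ↥C = q + 1) :
    Fintype.card S = q ^ 2 + 1 := by
  classical
  obtain ⟨hcard4, p, hpinj, hnp⟩ := MP.M3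
  have h01 : p 0 ≠ p 1 := fun h => by exact absurd (hpinj h) (by decide)
  have h12 : p 1 ≠ p 2 := fun h => by exact absurd (hpinj h) (by decide)
  have h02 : p 0 ≠ p 2 := fun h => by exact absurd (hpinj h) (by decide)
  obtain ⟨A, ⟨hA, ha0, ha1, ha2⟩, hAu⟩ := MP.M1 (p 0) (p 1) (p 2) h01 h12 h02
  obtain ⟨i, hbi⟩ := not_forall.mp (hnp A hA)
  set a := p 0 with ha_def
  set b := p i with hb_def
  have haA : a ∈ A := ha0
  have hbA : b ∉ A := hbi
  have hab : a ≠ b := fun h => hbA (h ▸ haA)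
  -- circle cardinality as ncard
  have hcirc' : ∀ C ∈ MP.circles, C.ncard = q + 1 := by
    intro C hC
    rw [← Nat.card_coe_set_eq]
    exact hcirc C hC
  -- two circles sharing three distinct points are equal
  have circ_eq : ∀ {B C : Set S} {x y z : S}, B ∈ MP.circles → C ∈ MP.circles →
      x ≠ y → y ≠ z → x ≠ z → x ∈ B → y ∈ B → z ∈ B → x ∈ C → y ∈ C → z ∈ C → B = C := by
    intro B C x y z hB hC hxy hyz hxz hxB hyB hzB hxC hyC hzC
    obtain ⟨D, _, hDu⟩ := MP.M1 x y z hxy hyz hxz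
    rw [hDu B ⟨hB, hxB, hyB, hzB⟩, hDu C ⟨hC, hxC, hyC, hzC⟩]
  -- the circle through a, b and a third point
  let thru : S → Set S := fun c =>
    if h : a ≠ b ∧ b ≠ c ∧ a ≠ c then (MP.M1 a b c h.1 h.2.1 h.2.2).choose else ∅
  have thru_spec : ∀ c : S, b ≠ c → a ≠ c →
      thru c ∈ MP.circles ∧ a ∈ thru c ∧ b ∈ thru c ∧ c ∈ thru c := by
    intro c hbc hac
    have h : a ≠ b ∧ b ≠ c ∧ a ≠ c := ⟨hab, hbc, hac⟩
    simp only [thru, dif_pos h]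
    exact (MP.M1 a b c h.1 h.2.1 h.2.2).choose_spec.1
  have thru_uniq : ∀ c C : S → Prop, True → True := fun _ _ _ => trivial
  have thru_eq : ∀ (c : S) (C : Set S), b ≠ c → a ≠ c → C ∈ MP.circles →
      a ∈ C → b ∈ C → c ∈ C → thru c = C := by
    intro c C hbc hac hC haC hbC hcC
    have h : a ≠ b ∧ b ≠ c ∧ a ≠ c := ⟨hab, hbc, hac⟩
    simp only [thru, dif_pos h]
    exact ((MP.M1 a b c h.1 h.2.1 h.2.2).choose_spec.2 C ⟨hC, haC, hbC, hcC⟩).symm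
  -- the tangent circle B₀ at a through b
  obtain ⟨B₀, ⟨hB₀, haB₀, hbB₀, hAB₀⟩, hB₀u⟩ := MP.M2 A hA a haA b hbA
  -- the pencil of circles through a and b
  set T : Set (Set S) := {C | C ∈ MP.circles ∧ a ∈ C ∧ b ∈ C} with hT_def
  -- ψ : A → T is a bijection
  set ψ : S → Set S := fun c => if c = a then B₀ else thru c with hψ_def
  have hψmemT : ∀ c ∈ A, ψ c ∈ T := by
    intro c hcA
    by_cases hca : c = a
    · simp only [ψ, if_pos hca]
      exact ⟨hB₀, haB₀, hbB₀⟩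
    · have hbc : b ≠ c := fun h => hbA (h ▸ hcA)
      have hac : a ≠ c := fun h => hca h.symm
      simp only [ψ, if_neg hca]
      obtain ⟨h1, h2, h3, _⟩ := thru_spec c hbc hac
      exact ⟨h1, h2, h3⟩
  have hTimage : T = ψ '' A := by
    apply Set.Subset.antisymm
    · rintro C ⟨hC, haC, hbC⟩
      by_cases htan : A ∩ C = {a}
      · refine ⟨a, haA, ?_⟩
        simp only [ψ, if_pos rfl]
        exact (hB₀u C ⟨hC, haC, hbC, htan⟩).symm ▸ rfl
      · -- there is a second intersection point
        have hsub : ¬ A ∩ C ⊆ {a} := by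
          intro hsub
          exact htan (Set.Subset.antisymm hsub (by simp [haA, haC]))
        obtain ⟨c, hcAC, hca⟩ := Set.not_subset.mp hsub
        have hca' : c ≠ a := by simpa using hca
        have hcA : c ∈ A := hcAC.1
        have hbc : b ≠ c := fun h => hbA (h ▸ hcA)
        have hac : a ≠ c := fun h => hca' h.symm
        refine ⟨c, hcA, ?_⟩
        simp only [ψ, if_neg hca']
        exact thru_eq c C hbc hac hC haC hbC hcAC.2
    · rintro _ ⟨c, hcA, rfl⟩
      exact hψmemT c hcA
  have hψinj : Set.InjOn ψ A := by
    intro c hcA c' hc'A hcc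
    by_cases hca : c = a <;> by_cases hc'a : c' = a
    · rw [hca, hc'a]
    · exfalso
      have hbc' : b ≠ c' := fun h => hbA (h ▸ hc'A)
      have hac' : a ≠ c' := fun h => hc'a h.symm
      obtain ⟨_, _, _, hc'mem⟩ := thru_spec c' hbc' hac'
      have : ψ c = B₀ := by simp only [ψ, if_pos hca]
      have h2 : ψ c' = thru c' := by simp only [ψ, if_neg hc'a]
      have hc'B₀ : c' ∈ B₀ := by rw [← this, hcc, h2]; exact hc'mem
      have : c' ∈ A ∩ B₀ := ⟨hc'A, hc'B₀⟩
      rw [hAB₀] at this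
      exact hc'a this
    · exfalso
      have hbc : b ≠ c := fun h => hbA (h ▸ hcA)
      have hac : a ≠ c := fun h => hca h.symm
      obtain ⟨_, _, _, hcmem⟩ := thru_spec c hbc hac
      have h1 : ψ c = thru c := by simp only [ψ, if_neg hca]
      have h2 : ψ c' = B₀ := by simp only [ψ, if_pos hc'a]
      have hcB₀ : c ∈ B₀ := by rw [← h2, ← hcc, h1]; exact hcmem
      have : c ∈ A ∩ B₀ := ⟨hcA, hcB₀⟩
      rw [hAB₀] at this
      exact hca this
    · by_contra hne
      have hbc : b ≠ c := fun h => hbA (h ▸ hcA)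
      have hac : a ≠ c := fun h => hca h.symm
      have hbc' : b ≠ c' := fun h => hbA (h ▸ hc'A)
      have hac' : a ≠ c' := fun h => hc'a h.symm
      obtain ⟨hcirc1, hamem, hbmem, hcmem⟩ := thru_spec c hbc hac
      obtain ⟨_, _, _, hc'mem⟩ := thru_spec c' hbc' hac'
      have h1 : ψ c = thru c := by simp only [ψ, if_neg hca]
      have h2 : ψ c' = thru c' := by simp only [ψ, if_neg hc'a]
      have heq : thru c = thru c' := by rw [← h1, ← h2, hcc]
      have hc'mem' : c' ∈ thru c := heq ▸ hc'mem
      -- A and thru c share a, c, c'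
      have : A = thru c := circ_eq hA hcirc1 hac hne (hac') haA hcA hc'A hamem hcmem hc'mem'
      exact hbA (this ▸ hbmem)
  have hTcard : T.ncard = q + 1 := by
    rw [hTimage, Set.ncard_image_of_injOn hψinj, hcirc' A hA]
  -- Now count S ∖ {a, b} fiberwise over circles in T
  have hTfin : T.Finite := Set.toFinite T
  set Tf : Finset (Set S) := hTfin.toFinset with hTf_def
  have hTfcard : Tf.card = q + 1 := by
    rw [← hTcard, Set.ncard_eq_toFinset_card T hTfin]
  set U : Finset S := Finset.univ \ {a, b} with hU_def
  have hUcard : U.card = Fintype.card S - 2 := by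
    rw [hU_def, Finset.card_sdiff_of_subset (Finset.subset_univ _), Finset.card_univ]
    congr 1
    rw [Finset.card_insert_of_notMem (by simp [hab]), Finset.card_singleton]
  have hmem : ∀ y ∈ U, thru y ∈ Tf := by
    intro y hy
    simp only [hU_def, Finset.mem_sdiff, Finset.mem_insert, Finset.mem_singleton] at hy
    have hya : y ≠ a := fun h => hy.2 (Or.inl h)
    have hyb : y ≠ b := fun h => hy.2 (Or.inr h)
    obtain ⟨h1, h2, h3, _⟩ := thru_spec y hyb.symm hya.symm
    rw [hTf_def, Set.Finite.mem_toFinset]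
    exact ⟨h1, h2, h3⟩
  have hsum := Finset.card_eq_sum_card_fiberwise hmem
  have hfiber : ∀ C ∈ Tf, (U.filter fun y => thru y = C).card = q - 1 := by
    intro C hC
    rw [hTf_def, Set.Finite.mem_toFinset] at hC
    obtain ⟨hCc, haC, hbC⟩ := hC
    have hfinC : (C \ {a, b}).Finite := Set.toFinite _
    have hfe : (U.filter fun y => thru y = C) = hfinC.toFinset := by
      ext y
      simp only [Finset.mem_filter, hU_def, Finset.mem_sdiff, Finset.mem_univ, true_and,
        Finset.mem_insert, Finset.mem_singleton, Set.Finite.mem_toFinset, Set.mem_diff,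
        Set.mem_insert_iff, Set.mem_singleton_iff]
      constructor
      · rintro ⟨hnotab, heq⟩
        have hya : y ≠ a := fun h => hnotab (Or.inl h)
        have hyb : y ≠ b := fun h => hnotab (Or.inr h)
        obtain ⟨_, _, _, hymem⟩ := thru_spec y hyb.symm hya.symm
        exact ⟨heq ▸ hymem, fun h => hnotab h⟩
      · rintro ⟨hyC, hnotab⟩
        have hya : y ≠ a := fun h => hnotab (Or.inl h)
        have hyb : y ≠ b := fun h => hnotab (Or.inr h)
        exact ⟨fun h => hnotab h, thru_eq y C hyb.symm hya.symm hCc haC hbC hyC⟩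
    rw [hfe, ← Set.ncard_eq_toFinset_card _ hfinC]
    have hsubC : ({a, b} : Set S) ⊆ C := by
      intro x hx
      rcases hx with h | h
      · exact h ▸ haC
      · exact h ▸ hbC
    rw [Set.ncard_diff hsubC, hcirc' C hCc, Set.ncard_pair hab]
    omega
  have hcount : U.card = (q + 1) * (q - 1) := by
    rw [hsum, Finset.sum_congr rfl hfiber, Finset.sum_const, hTfcard, smul_eq_mul]
  rw [hUcard] at hcount
  -- finish arithmetic
  obtain ⟨r, rfl⟩ : ∃ r, q = r + 2 := ⟨q - 2, by omega⟩
  have hexp : (r + 2 + 1) * (r + 2 - 1) + 1 = (r + 2) ^ 2 := by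
    have h1 : r + 2 - 1 = r + 1 := by omega
    rw [h1]; ring
  omega
end

section
/- In a finite Möbius plane in which every circle contains exactly q+1 points (q ≥ 2), the total number of circles is q·(q² + 1). -/
namespace MoebiusAux

variable {S : Type*} [Fintype S] (MP : FiniteMoebiusPlane S)

/-- Uniqueness: two circles sharing three distinct points coincide. -/
lemma circle_eq_of_three {C D : Set S} (hC : C ∈ MP.circles) (hD : D ∈ MP.circles)
    {a b c : S} (hab : a ≠ b) (hbc : b ≠ c) (hac : a ≠ c)
    (haC : a ∈ C) (hbC : b ∈ C) (hcC : c ∈ C)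
    (haD : a ∈ D) (hbD : b ∈ D) (hcD : c ∈ D) : C = D := by
  obtain ⟨E, _, hu⟩ := MP.M1 a b c hab hbc hac
  rw [hu C ⟨hC, haC, hbC, hcC⟩, hu D ⟨hD, haD, hbD, hcD⟩]

/-- The circle through three distinct points. -/
noncomputable def circ (a b c : S) (hab : a ≠ b) (hbc : b ≠ c) (hac : a ≠ c) : Set S :=
  (MP.M1 a b c hab hbc hac).exists.choose

lemma circ_spec {a b c : S} (hab : a ≠ b) (hbc : b ≠ c) (hac : a ≠ c) :
    circ MP a b c hab hbc hac ∈ MP.circles ∧ a ∈ circ MP a b c hab hbc hac ∧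
      b ∈ circ MP a b c hab hbc hac ∧ c ∈ circ MP a b c hab hbc hac :=
  (MP.M1 a b c hab hbc hac).exists.choose_spec

lemma circ_unique {a b c : S} (hab : a ≠ b) (hbc : b ≠ c) (hac : a ≠ c)
    {D : Set S} (hD : D ∈ MP.circles) (haD : a ∈ D) (hbD : b ∈ D) (hcD : c ∈ D) :
    D = circ MP a b c hab hbc hac := by
  obtain ⟨h1, h2, h3, h4⟩ := circ_spec MP hab hbc hac
  exact circle_eq_of_three MP hD h1 hab hbc hac haD hbD hcD h2 h3 h4

/-- For every circle there is a point outside it. -/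
lemma exists_not_mem {A : Set S} (hA : A ∈ MP.circles) : ∃ b : S, b ∉ A := by
  obtain ⟨_, p, _, hp⟩ := MP.M3
  have := hp A hA
  push_neg at this
  obtain ⟨i, hi⟩ := this
  exact ⟨p i, hi⟩

/-- Cardinality of a circle minus two of its points. -/
lemma ncard_circle_diff_pair {q : ℕ} (hcirc : ∀ C ∈ MP.circles, Nat.card ↥C = q + 1)
    {C : Set S} (hC : C ∈ MP.circles) {p b : S} (hp : p ∈ C) (hb : b ∈ C) (hpb : p ≠ b) :
    (C \ {p, b}).ncard = q - 1 := by
  have hCcard : C.ncard = q + 1 := by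
    rw [← Nat.card_coe_set_eq]; exact hcirc C hC
  have hsub : ({p, b} : Set S) ⊆ C := by
    intro x hx; rcases hx with h | h
    · simpa [h] using hp
    · simp only [Set.mem_singleton_iff] at h; simpa [h] using hb
  have h2 : ({p, b} : Set S).ncard = 2 := Set.ncard_pair hpb
  rw [Set.ncard_diff hsub, hCcard, h2]
  omega

/-- The number of points of a finite Möbius plane of order `q` is `q² + 1`. -/
lemma card_points (q : ℕ) (hq : 2 ≤ q)
    (hcirc : ∀ C ∈ MP.circles, Nat.card ↥C = q + 1) :
    Fintype.card S = q ^ 2 + 1 := by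
  classical
  -- choose a circle A
  obtain ⟨hS4, pts, hinj, -⟩ := MP.M3
  have h01 : pts 0 ≠ pts 1 := fun h => by simpa using hinj h
  have h12 : pts 1 ≠ pts 2 := fun h => by simpa using hinj h
  have h02 : pts 0 ≠ pts 2 := fun h => by simpa using hinj h
  set A : Set S := circ MP (pts 0) (pts 1) (pts 2) h01 h12 h02 with hAdef
  obtain ⟨hA, hA0, hA1, hA2⟩ := circ_spec MP h01 h12 h02
  rw [← hAdef] at hA hA0 hA1 hA2
  set p : S := pts 0 with hpdef
  have hpA : p ∈ A := hA0
  obtain ⟨b, hbA⟩ := exists_not_mem MP hA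
  have hpb : p ≠ b := fun h => hbA (h ▸ hpA)
  -- the tangent circle at p through b
  obtain ⟨T, ⟨hT, hpT, hbT, hTA⟩, hTu⟩ := MP.M2 A hA p hpA b hbA
  have hAfin : A.Finite := Set.toFinite A
  -- a circle through b and p meets A in at most one point other than p
  have atmost : ∀ C ∈ MP.circles, b ∈ C → p ∈ C → ∀ a a' : S, a ∈ A → a' ∈ A →
      a ∈ C → a' ∈ C → a ≠ p → a' ≠ p → a = a' := by
    intro C hC hbC hpC a a' haA ha'A haC ha'C hap ha'p
    by_contra hne
    have hAC : A = C := circle_eq_of_three MP hA hC (Ne.symm hap) hne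
      (Ne.symm ha'p) hpA haA ha'A hpC haC ha'C
    exact hbA (hAC ▸ hbC)
  -- the "second intersection point" map
  set g : S → S := fun c =>
    if h : ∃ a, a ∈ A ∧ a ≠ p ∧ ∃ C ∈ MP.circles, p ∈ C ∧ b ∈ C ∧ c ∈ C ∧ a ∈ C
    then h.choose else p with hgdef
  set D : Finset S := Finset.univ \ {p, b} with hDdef
  have hmemD : ∀ c : S, c ∈ D ↔ c ≠ p ∧ c ≠ b := by
    intro c; simp [hDdef]
  have gmem : ∀ c ∈ D, g c ∈ hAfin.toFinset := by
    intro c _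
    simp only [hgdef]
    split
    · next h => exact hAfin.mem_toFinset.2 h.choose_spec.1
    · exact hAfin.mem_toFinset.2 hpA
  have hcard := Finset.card_eq_sum_card_fiberwise gmem
  -- the fiber over `a ∈ A` is a circle minus `{p, b}`, of size `q - 1`
  have fiber_card : ∀ a ∈ hAfin.toFinset, (D.filter fun c => g c = a).card = q - 1 := by
    intro a haA'
    have haA : a ∈ A := hAfin.mem_toFinset.1 haA'
    by_cases hap : a = p
    · -- tangent fiber: equals T \ {p, b}
      subst hap
      have hfeq : (D.filter fun c => g c = p) = (Set.toFinite (T \ {p, b})).toFinset := by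
        ext c
        rw [Finset.mem_filter, Set.Finite.mem_toFinset]
        constructor
        · rintro ⟨hcD, hgc⟩
          obtain ⟨hcp, hcb⟩ := (hmemD c).1 hcD
          -- the branch taken must be the else branch
          have hneg : ¬ ∃ x, x ∈ A ∧ x ≠ p ∧ ∃ C ∈ MP.circles, p ∈ C ∧ b ∈ C ∧ c ∈ C ∧ x ∈ C := by
            intro h
            have hh : g c = h.choose := by simp only [hgdef]; exact dif_pos h
            exact h.choose_spec.2.1 (by rw [← hh, hgc])
          -- the circle through p, b, c is tangent to A, hence equals T
          set L := circ MP p b c hpb (Ne.symm hcb) (Ne.symm hcp) with hLdef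
          obtain ⟨hL, hpL, hbL, hcL⟩ := circ_spec MP hpb (Ne.symm hcb) (Ne.symm hcp)
          rw [← hLdef] at hL hpL hbL hcL
          have hALa : A ∩ L = {p} := by
            apply Set.eq_singleton_iff_unique_mem.2
            refine ⟨⟨hpA, hpL⟩, ?_⟩
            rintro x ⟨hxA, hxL⟩
            by_contra hxp
            exact hneg ⟨x, hxA, hxp, L, hL, hpL, hbL, hcL, hxL⟩
          have hLT : L = T := hTu L ⟨hL, hpL, hbL, hALa⟩
          exact ⟨hLT ▸ hcL, by simp [hcp, hcb]⟩
        · rintro ⟨hcT, hne⟩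
          have hcp : c ≠ p := fun e => hne (by simp [e])
          have hcb : c ≠ b := fun e => hne (by simp [e])
          refine ⟨(hmemD c).2 ⟨hcp, hcb⟩, ?_⟩
          -- no secant witness exists, since the circle through p, b, c is T
          have hneg : ¬ ∃ x, x ∈ A ∧ x ≠ p ∧ ∃ C ∈ MP.circles, p ∈ C ∧ b ∈ C ∧ c ∈ C ∧ x ∈ C := by
            rintro ⟨x, hxA, hxp, C0, hC0, hpC0, hbC0, hcC0, hxC0⟩
            have hC0T : C0 = T := circle_eq_of_three MP hC0 hT hpb (Ne.symm hcb)
              (Ne.symm hcp) hpC0 hbC0 hcC0 hpT hbT hcT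
            have hx : x ∈ A ∩ T := ⟨hxA, hC0T ▸ hxC0⟩
            rw [hTA] at hx
            exact hxp hx
          simp only [hgdef]
          exact dif_neg hneg
      rw [hfeq, ← Set.ncard_eq_toFinset_card _ (Set.toFinite _)]
      exact ncard_circle_diff_pair MP hcirc hT hpT hbT hpb
    · -- secant fiber: equals (circ p b a) \ {p, b}
      have hba : b ≠ a := fun h => hbA (h ▸ haA)
      have hpa : p ≠ a := Ne.symm hap
      set L := circ MP p b a hpb hba hpa with hLdef
      obtain ⟨hL, hpL, hbL, haL⟩ := circ_spec MP hpb hba hpa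
      rw [← hLdef] at hL hpL hbL haL
      have hfeq : (D.filter fun c => g c = a) = (Set.toFinite (L \ {p, b})).toFinset := by
        ext c
        rw [Finset.mem_filter, Set.Finite.mem_toFinset]
        constructor
        · rintro ⟨hcD, hgc⟩
          obtain ⟨hcp, hcb⟩ := (hmemD c).1 hcD
          have hpos : ∃ x, x ∈ A ∧ x ≠ p ∧ ∃ C ∈ MP.circles, p ∈ C ∧ b ∈ C ∧ c ∈ C ∧ x ∈ C := by
            by_contra h
            have hh : g c = p := by simp only [hgdef]; exact dif_neg h
            exact hap (by rw [← hgc, hh])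
          have hgc' : g c = hpos.choose := by simp only [hgdef]; exact dif_pos hpos
          obtain ⟨hxA, hxp, C0, hC0, hpC0, hbC0, hcC0, hxC0⟩ := hpos.choose_spec
          rw [hgc'] at hgc
          rw [hgc] at hxA hxp hxC0
          -- C0 is the circle through p, b, a, i.e. L
          have hC0L : C0 = L := circ_unique MP hpb hba hpa hC0 hpC0 hbC0 hxC0
          exact ⟨hC0L ▸ hcC0, by simp [hcp, hcb]⟩
        · rintro ⟨hcL, hne⟩
          have hcp : c ≠ p := fun e => hne (by simp [e])
          have hcb : c ≠ b := fun e => hne (by simp [e])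
          refine ⟨(hmemD c).2 ⟨hcp, hcb⟩, ?_⟩
          have hpos : ∃ x, x ∈ A ∧ x ≠ p ∧ ∃ C ∈ MP.circles, p ∈ C ∧ b ∈ C ∧ c ∈ C ∧ x ∈ C :=
            ⟨a, haA, hap, L, hL, hpL, hbL, hcL, haL⟩
          have hgc' : g c = hpos.choose := by simp only [hgdef]; exact dif_pos hpos
          obtain ⟨hxA, hxp, C0, hC0, hpC0, hbC0, hcC0, hxC0⟩ := hpos.choose_spec
          -- C0 and L are both the circle through p, b, c, hence equal
          have hC0L : C0 = L := by
            rw [circ_unique MP hpb (Ne.symm hcb) (Ne.symm hcp) hC0 hpC0 hbC0 hcC0,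
              circ_unique MP hpb (Ne.symm hcb) (Ne.symm hcp) hL hpL hbL hcL]
          rw [hgc']
          exact atmost L hL hbL hpL hpos.choose a hxA haA (hC0L ▸ hxC0) haL hxp hap
      rw [hfeq, ← Set.ncard_eq_toFinset_card _ (Set.toFinite _)]
      exact ncard_circle_diff_pair MP hcirc hL hpL hbL hpb
  -- sum up
  rw [Finset.sum_congr rfl fiber_card, Finset.sum_const, smul_eq_mul] at hcard
  have hAcardF : hAfin.toFinset.card = q + 1 := by
    rw [← Set.ncard_eq_toFinset_card _ hAfin, ← Nat.card_coe_set_eq]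
    exact hcirc A hA
  have hDcard : D.card = Fintype.card S - 2 := by
    rw [hDdef, Finset.card_sdiff_of_subset (Finset.subset_univ _), Finset.card_univ,
      Finset.card_pair hpb]
  rw [hDcard, hAcardF] at hcard
  obtain ⟨r, rfl⟩ : ∃ r, q = r + 2 := ⟨q - 2, by omega⟩
  have e1 : (r + 2 + 1) * (r + 2 - 1) = r ^ 2 + 4 * r + 3 := by
    have : r + 2 - 1 = r + 1 := by omega
    rw [this]; ring
  have e2 : (r + 2) ^ 2 + 1 = r ^ 2 + 4 * r + 5 := by ring
  omega

end MoebiusAux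

/-- In a finite Möbius plane in which every circle contains exactly `q + 1` points
(`q ≥ 2`), the total number of circles is `q·(q² + 1)`. -/
theorem moebius_card_circles (S : Type*) [Fintype S]
    (MP : FiniteMoebiusPlane S) (q : ℕ) (hq : 2 ≤ q)
    (hcirc : ∀ C ∈ MP.circles, Nat.card ↥C = q + 1) :
    Nat.card ↥MP.circles = q * (q ^ 2 + 1) := by
  classical
  have hn : Fintype.card S = q ^ 2 + 1 := MoebiusAux.card_points MP q hq hcirc
  set circsF : Finset (Set S) := (Set.toFinite MP.circles).toFinset with hcF
  set F : Finset S → Set S := fun t =>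
    if h : ∃ C ∈ MP.circles, ↑t ⊆ C then h.choose else ∅ with hFdef
  set T : Finset (Finset S) := Finset.univ.powersetCard 3 with hTdef
  have hTmem : ∀ t : Finset S, t ∈ T ↔ t.card = 3 := by
    intro t; simp [hTdef, Finset.mem_powersetCard]
  -- for a 3-element set, there is a circle through it, and it is unique
  have hFex : ∀ t : Finset S, t.card = 3 → ∃ C ∈ MP.circles, ↑t ⊆ C := by
    intro t ht
    obtain ⟨a, b, c, hab, hac, hbc, rfl⟩ := Finset.card_eq_three.1 ht
    obtain ⟨h1, h2, h3, h4⟩ := MoebiusAux.circ_spec MP hab hbc hac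
    refine ⟨_, h1, ?_⟩
    intro x hx
    simp only [Finset.coe_insert, Set.mem_insert_iff, Finset.coe_singleton,
      Set.mem_singleton_iff] at hx
    rcases hx with rfl | rfl | rfl <;> assumption
  have hFval : ∀ t : Finset S, t.card = 3 → F t ∈ MP.circles ∧ ↑t ⊆ F t := by
    intro t ht
    have h := hFex t ht
    constructor
    · simp only [hFdef, dif_pos h]; exact h.choose_spec.1
    · simp only [hFdef, dif_pos h]; exact h.choose_spec.2
  have hFuniq : ∀ t : Finset S, t.card = 3 → ∀ C ∈ MP.circles, ↑t ⊆ C → F t = C := by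
    intro t ht C hC htC
    obtain ⟨a, b, c, hab, hac, hbc, rfl⟩ := Finset.card_eq_three.1 ht
    obtain ⟨hF1, hF2⟩ := hFval _ ht
    have hmem : ∀ x ∈ ({a, b, c} : Finset S), x ∈ F {a, b, c} ∧ x ∈ C := by
      intro x hx
      exact ⟨hF2 hx, htC hx⟩
    have ha := hmem a (by simp)
    have hb := hmem b (by simp)
    have hc := hmem c (by simp)
    exact MoebiusAux.circle_eq_of_three MP hF1 hC hab hbc hac
      ha.1 hb.1 hc.1 ha.2 hb.2 hc.2
  have hFmem : ∀ t ∈ T, F t ∈ circsF := by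
    intro t ht
    rw [hcF, Set.Finite.mem_toFinset]
    exact (hFval t ((hTmem t).1 ht)).1
  have hcount := Finset.card_eq_sum_card_fiberwise hFmem
  have fiber_card : ∀ C ∈ circsF, (T.filter fun t => F t = C).card = (q + 1).choose 3 := by
    intro C hC'
    have hC : C ∈ MP.circles := by rwa [hcF, Set.Finite.mem_toFinset] at hC'
    have hCfin : C.Finite := Set.toFinite C
    have hfeq : (T.filter fun t => F t = C) = hCfin.toFinset.powersetCard 3 := by
      ext t
      simp only [Finset.mem_filter, Finset.mem_powersetCard]
      constructor
      · rintro ⟨htT, hFt⟩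
        have ht3 := (hTmem t).1 htT
        have hsub : ↑t ⊆ C := hFt ▸ (hFval t ht3).2
        refine ⟨?_, ht3⟩
        intro x hx
        exact hCfin.mem_toFinset.2 (hsub hx)
      · rintro ⟨hsub, ht3⟩
        refine ⟨(hTmem t).2 ht3, ?_⟩
        apply hFuniq t ht3 C hC
        intro x hx
        exact hCfin.mem_toFinset.1 (hsub hx)
    rw [hfeq, Finset.card_powersetCard]
    congr 1
    rw [← Set.ncard_eq_toFinset_card _ hCfin, ← Nat.card_coe_set_eq]
    exact hcirc C hC
  rw [Finset.sum_congr rfl fiber_card, Finset.sum_const, smul_eq_mul] at hcount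
  have hTcard : T.card = (q ^ 2 + 1).choose 3 := by
    rw [hTdef, Finset.card_powersetCard, Finset.card_univ, hn]
  rw [hTcard] at hcount
  -- Nat.card of the circles equals circsF.card
  have hN : Nat.card ↥MP.circles = circsF.card := by
    rw [Nat.card_coe_set_eq, Set.ncard_eq_toFinset_card _ (Set.toFinite MP.circles)]
  -- the binomial identity
  have six_mul : ∀ n : ℕ, 6 * n.choose 3 = n * (n - 1) * (n - 2) := by
    intro n
    have h := Nat.descFactorial_eq_factorial_mul_choose n 3
    have h3 : Nat.factorial 3 = 6 := by decide
    rw [h3] at h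
    rw [← h]
    simp [Nat.descFactorial_succ, Nat.descFactorial_zero]
    ring
  have hid : (q ^ 2 + 1).choose 3 = (q * (q ^ 2 + 1)) * (q + 1).choose 3 := by
    have h6 : 6 * ((q ^ 2 + 1).choose 3) = 6 * ((q * (q ^ 2 + 1)) * (q + 1).choose 3) := by
      rw [six_mul]
      have : 6 * (q * (q ^ 2 + 1) * (q + 1).choose 3)
          = (q * (q ^ 2 + 1)) * (6 * (q + 1).choose 3) := by ring
      rw [this, six_mul]
      obtain ⟨r, rfl⟩ : ∃ r, q = r + 2 := ⟨q - 2, by omega⟩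
      have e1 : (r + 2) ^ 2 + 1 - 1 = (r + 2) ^ 2 := by omega
      have e2 : (r + 2) ^ 2 + 1 - 2 = r ^ 2 + 4 * r + 3 := by
        have : (r + 2) ^ 2 = r ^ 2 + 4 * r + 4 := by ring
        omega
      have e3 : r + 2 + 1 - 1 = r + 2 := by omega
      have e4 : r + 2 + 1 - 2 = r + 1 := by omega
      rw [e1, e2, e3, e4]
      ring
    omega
  have hpos : 0 < (q + 1).choose 3 := Nat.choose_pos (by omega)
  rw [hN]
  have : circsF.card * (q + 1).choose 3 = (q * (q ^ 2 + 1)) * (q + 1).choose 3 := by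
    rw [← hcount, hid]
  exact Nat.eq_of_mul_eq_mul_right hpos this
end

section
/- In a finite Möbius plane in which every circle contains exactly q+1 points (q ≥ 2), for every point a the number of circles containing a is exactly q² + q. -/
namespace MoebiusAux

variable {S : Type*} [Fintype S] (MP : FiniteMoebiusPlane S)

/-- Two circles sharing three pairwise distinct points coincide. -/
lemma circ_unique_s12 {A B : Set S} {a b c : S} (hA : A ∈ MP.circles) (hB : B ∈ MP.circles)
    (hab : a ≠ b) (hbc : b ≠ c) (hac : a ≠ c)
    (ha : a ∈ A) (hb : b ∈ A) (hc : c ∈ A)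
    (ha' : a ∈ B) (hb' : b ∈ B) (hc' : c ∈ B) : A = B := by
  obtain ⟨C, -, hU⟩ := MP.M1 a b c hab hbc hac
  rw [hU A ⟨hA, ha, hb, hc⟩, hU B ⟨hB, ha', hb', hc'⟩]

lemma exists_third (h4 : 4 ≤ Fintype.card S) (a b : S) : ∃ c : S, c ≠ a ∧ c ≠ b := by
  classical
  by_contra h
  push_neg at h
  have hsub : (Finset.univ : Finset S) ⊆ {a, b} := by
    intro c _
    rcases eq_or_ne c a with h' | h'
    · simp [h']
    · simp [h c h']
  have := Finset.card_le_card hsub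
  have h2 : ({a, b} : Finset S).card ≤ 2 := Finset.card_insert_le _ _ |>.trans (by simp)
  rw [← Finset.card_univ] at h4
  omega

lemma exists_circle_two (a b : S) (hab : a ≠ b) :
    ∃ A, A ∈ MP.circles ∧ a ∈ A ∧ b ∈ A := by
  obtain ⟨c, hca, hcb⟩ := exists_third MP.M3.1 a b
  obtain ⟨C, ⟨hC, ha, hb, _⟩, -⟩ := MP.M1 a b c hab hcb.symm hca.symm
  exact ⟨C, hC, ha, hb⟩

lemma exists_notmem {A : Set S} (hA : A ∈ MP.circles) : ∃ d, d ∉ A := by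
  obtain ⟨-, p, -, hp⟩ := MP.M3
  have := hp A hA
  push_neg at this
  obtain ⟨i, hi⟩ := this
  exact ⟨p i, hi⟩

lemma exists_circle_avoid (a b : S) (hab : a ≠ b) :
    ∃ A, A ∈ MP.circles ∧ a ∈ A ∧ b ∉ A := by
  obtain ⟨A0, hA0, ha0, hb0⟩ := exists_circle_two MP a b hab
  obtain ⟨d, hd⟩ := exists_notmem MP hA0
  obtain ⟨B, ⟨hB, haB, _, hint⟩, -⟩ := MP.M2 A0 hA0 a ha0 d hd
  refine ⟨B, hB, haB, fun hbB => ?_⟩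
  have hmem : b ∈ A0 ∩ B := ⟨hb0, hbB⟩
  rw [hint] at hmem
  exact hab (Set.mem_singleton_iff.mp hmem).symm

/-- The pencil of circles through two distinct points has `q + 1` members. -/
lemma count_pencil (q : ℕ) (hcirc : ∀ C ∈ MP.circles, Nat.card ↥C = q + 1)
    (a b : S) (hab : a ≠ b) :
    Nat.card {C : Set S // C ∈ MP.circles ∧ a ∈ C ∧ b ∈ C} = q + 1 := by
  classical
  obtain ⟨A, hA, haA, hbA⟩ := exists_circle_avoid MP a b hab
  obtain ⟨B0, ⟨hB0, haB0, hbB0, hintB0⟩, hB0uniq⟩ := MP.M2 A hA a haA b hbA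
  -- secant circles
  have hsec : ∀ x : S, x ∈ A → x ≠ a →
      ∃ C, C ∈ MP.circles ∧ a ∈ C ∧ b ∈ C ∧ x ∈ C := by
    intro x hx hxa
    have hxb : x ≠ b := fun h => hbA (h ▸ hx)
    obtain ⟨C, ⟨hC, haC, hbC, hxC⟩, -⟩ := MP.M1 a b x hab hxb.symm hxa.symm
    exact ⟨C, hC, haC, hbC, hxC⟩
  choose sec hsec1 hsec2 hsec3 hsec4 using hsec
  set g : ↥A → {C : Set S // C ∈ MP.circles ∧ a ∈ C ∧ b ∈ C} :=
    fun x => if h : (x : S) = a then ⟨B0, hB0, haB0, hbB0⟩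
      else ⟨sec x x.2 h, hsec1 x x.2 h, hsec2 x x.2 h, hsec3 x x.2 h⟩ with hg
  have hbij : Function.Bijective g := by
    constructor
    · rintro ⟨x, hx⟩ ⟨y, hy⟩ hxy
      by_cases hxa : x = a <;> by_cases hya : y = a
      · simp [hxa, hya]
      · exfalso
        simp only [hg, dif_pos hxa, dif_neg hya, Subtype.mk.injEq] at hxy
        have hyB0 : y ∈ B0 := by rw [hxy]; exact hsec4 y hy hya
        have : y ∈ A ∩ B0 := ⟨hy, hyB0⟩
        rw [hintB0] at this
        exact hya (Set.mem_singleton_iff.mp this)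
      · exfalso
        simp only [hg, dif_neg hxa, dif_pos hya, Subtype.mk.injEq] at hxy
        have hxB0 : x ∈ B0 := by rw [← hxy]; exact hsec4 x hx hxa
        have : x ∈ A ∩ B0 := ⟨hx, hxB0⟩
        rw [hintB0] at this
        exact hxa (Set.mem_singleton_iff.mp this)
      · simp only [hg, dif_neg hxa, dif_neg hya, Subtype.mk.injEq] at hxy
        by_contra hne
        have hxy' : x ≠ y := by simpa using hne
        -- a, x, y are three distinct points of both A and sec x
        have hax : a ≠ x := fun h => hxa h.symm
        have hCA : sec x hx hxa = A := by
          refine circ_unique_s12 MP (hsec1 x hx hxa) hA hax hxy' ?_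
            (hsec2 x hx hxa) (hsec4 x hx hxa) ?_ haA hx hy
          · exact fun h => hya h.symm
          · rw [hxy]; exact hsec4 y hy hya
        exact hbA (hCA ▸ hsec3 x hx hxa)
    · rintro ⟨C, hC, haC, hbC⟩
      by_cases htang : ∃ x, x ∈ A ∩ C ∧ x ≠ a
      · obtain ⟨x, ⟨hxA, hxC⟩, hxa⟩ := htang
        refine ⟨⟨x, hxA⟩, ?_⟩
        simp only [hg, dif_neg hxa]
        refine Subtype.ext ?_
        have hxb : x ≠ b := fun h => hbA (h ▸ hxA)
        exact circ_unique_s12 MP (hsec1 x hxA hxa) hC hab hxb.symm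
          (fun h => hxa h.symm)
          (hsec2 x hxA hxa) (hsec3 x hxA hxa) (hsec4 x hxA hxa) haC hbC hxC
      · push_neg at htang
        refine ⟨⟨a, haA⟩, ?_⟩
        simp only [hg, dif_pos]
        refine Subtype.ext ?_
        have hint : A ∩ C = {a} := by
          apply Set.eq_singleton_iff_unique_mem.mpr
          exact ⟨⟨haA, haC⟩, fun x hx => htang x hx⟩
        exact (hB0uniq C ⟨hC, haC, hbC, hint⟩).symm
  have := Nat.card_eq_of_bijective g hbij
  rw [← this]
  rw [Nat.card_coe_set_eq] at *
  rw [← Nat.card_coe_set_eq]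
  exact hcirc A hA

/-- Cardinality of a circle minus one point. -/
lemma card_punctured (q : ℕ) (hcirc : ∀ C ∈ MP.circles, Nat.card ↥C = q + 1)
    {C : Set S} (hC : C ∈ MP.circles) {a : S} (ha : a ∈ C) :
    Nat.card {x : S // x ∈ C ∧ x ≠ a} = q := by
  have hset : {x : S | x ∈ C ∧ x ≠ a} = C \ {a} := by
    ext x; simp [Set.mem_diff]
  have h1 : Nat.card {x : S // x ∈ C ∧ x ≠ a} = ({x : S | x ∈ C ∧ x ≠ a}).ncard :=
    Nat.card_coe_set_eq _
  rw [h1, hset, Set.ncard_diff_singleton_of_mem ha]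
  have := hcirc C hC
  rw [Nat.card_coe_set_eq] at this
  omega

/-- Cardinality of a circle minus two points. -/
lemma card_bipunctured (q : ℕ) (hcirc : ∀ C ∈ MP.circles, Nat.card ↥C = q + 1)
    {C : Set S} (hC : C ∈ MP.circles) {a b : S} (ha : a ∈ C) (hb : b ∈ C) (hab : a ≠ b) :
    Nat.card {x : S // x ∈ C ∧ x ≠ a ∧ x ≠ b} = q - 1 := by
  have hset : {x : S | x ∈ C ∧ x ≠ a ∧ x ≠ b} = C \ {a, b} := by
    ext x; simp [Set.mem_diff]; tauto
  have h1 : Nat.card {x : S // x ∈ C ∧ x ≠ a ∧ x ≠ b}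
      = ({x : S | x ∈ C ∧ x ≠ a ∧ x ≠ b}).ncard := Nat.card_coe_set_eq _
  have hsub : ({a, b} : Set S) ⊆ C := by
    rintro x (rfl | rfl); exacts [ha, hb]
  rw [h1, hset, Set.ncard_diff hsub, Set.ncard_pair hab]
  have := hcirc C hC
  rw [Nat.card_coe_set_eq] at this
  omega

end MoebiusAux

/-- In a finite Möbius plane in which every circle contains exactly `q + 1` points
(`q ≥ 2`), for every point `a` the number of circles containing `a` is exactly
`q² + q`. -/
theorem moebius_card_circles_through_point (S : Type*) [Fintype S]
    (MP : FiniteMoebiusPlane S) (q : ℕ) (hq : 2 ≤ q)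
    (hcirc : ∀ C ∈ MP.circles, Nat.card ↥C = q + 1) (a : S) :
    Nat.card {C : Set S // C ∈ MP.circles ∧ a ∈ C} = q ^ 2 + q := by
  classical
  set T := {C : Set S // C ∈ MP.circles ∧ a ∈ C} with hT
  set F : T → Type _ := fun C => {x : S // x ∈ C.1 ∧ x ≠ a} with hF
  set G : {b : S // b ≠ a} → Type _ :=
    fun b => {C : Set S // C ∈ MP.circles ∧ a ∈ C ∧ (b : S) ∈ C} with hG
  set e : (Σ C : T, F C) → (Σ b : {b : S // b ≠ a}, G b) :=
    fun p => ⟨⟨p.2.1, p.2.2.2⟩, ⟨p.1.1, p.1.2.1, p.1.2.2, p.2.2.1⟩⟩ with he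
  have hbij : Function.Bijective e := by
    constructor
    · rintro ⟨⟨C, hC, haC⟩, ⟨x, hxC, hxa⟩⟩ ⟨⟨D, hD, haD⟩, ⟨y, hyD, hya⟩⟩ h
      simp only [he, Sigma.mk.inj_iff, Subtype.mk.injEq] at h
      obtain ⟨h1, h2⟩ := h
      subst h1
      have h2' := eq_of_heq h2
      have : C = D := congrArg Subtype.val h2'
      subst this
      rfl
    · rintro ⟨⟨b, hba⟩, ⟨C, hC, haC, hbC⟩⟩
      exact ⟨⟨⟨C, hC, haC⟩, ⟨b, hbC, hba⟩⟩, rfl⟩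
  have hsig : Nat.card (Σ C : T, F C) = Nat.card (Σ b : {b : S // b ≠ a}, G b) :=
    Nat.card_eq_of_bijective e hbij
  have hL : Nat.card (Σ C : T, F C) = Nat.card T * q := by
    rw [Nat.card_eq_fintype_card, Fintype.card_sigma]
    have hconst : ∀ C : T, Fintype.card (F C) = q := by
      intro C
      rw [← Nat.card_eq_fintype_card]
      exact MoebiusAux.card_punctured MP q hcirc C.2.1 C.2.2
    rw [Finset.sum_congr rfl (fun C _ => hconst C), Finset.sum_const, smul_eq_mul,
      Finset.card_univ, ← Nat.card_eq_fintype_card]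
  have hR : Nat.card (Σ b : {b : S // b ≠ a}, G b) = q ^ 2 * (q + 1) := by
    rw [Nat.card_eq_fintype_card, Fintype.card_sigma]
    have hconst : ∀ b : {b : S // b ≠ a}, Fintype.card (G b) = q + 1 := by
      intro b
      rw [← Nat.card_eq_fintype_card]
      exact MoebiusAux.count_pencil MP q hcirc a b (Ne.symm b.2)
    rw [Finset.sum_congr rfl (fun b _ => hconst b), Finset.sum_const, smul_eq_mul,
      Finset.card_univ]
    have hcard : Fintype.card {b : S // b ≠ a} = q ^ 2 := by
      have h1 : Fintype.card {b : S // ¬ (b = a)} = Fintype.card S - Fintype.card {b : S // b = a} :=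
        Fintype.card_subtype_compl _
    -- card {b // b = a} = 1
      have h2 : Fintype.card {b : S // b = a} = 1 := Fintype.card_subtype_eq a
      have h3 := MoebiusAux.card_points MP q hq hcirc
      have : Fintype.card {b : S // b ≠ a} = Fintype.card {b : S // ¬ (b = a)} := rfl
      omega
    rw [hcard]
  rw [hL, hR] at hsig
  have hq0 : 0 < q := by omega
  have : Nat.card T * q = (q ^ 2 + q) * q := by rw [hsig]; ring
  exact Nat.eq_of_mul_eq_mul_right hq0 this
end

section
/- Let F be a finite field of characteristic 2 with |F| ≥ 4. For all nonzero e_i, e_j ∈ F there exist x, y, u, v ∈ F with (x, y) ≠ (0, 0), (u, v) ≠ (0, 0), (x + e_i, y) ≠ (0, 0) and (u, v + e_j) ≠ (0, 0), such that x·v = u·y and (x + e_i)·(v + e_j) = u·y. (That is, the message point m = (x,y) and ciphertext point c = (u,v) are collinear with the key point k = (0,0), and the bit-flipped points m' = (x + e_i, y) and c' = (u, v + e_j) are also collinear with k; this establishes completeness of the Möbius cipher in the case where the flipped input bit affects the x-coordinate and the flipped output bit affects the y-coordinate.) -/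
/-- Completeness of the Möbius cipher over a field of characteristic 2, mixed-coordinate
case: for all nonzero bit flips `ei, ej` there are a message point `m = (x, y)` and a
ciphertext point `c = (u, v)`, both nonzero (i.e. different from the key point
`k = (0,0)`), whose bit-flipped versions `m' = (x + ei, y)` and `c' = (u, v + ej)` are
also nonzero, such that both `m, c` and `m', c'` are collinear with `k = (0,0)`
(vanishing determinants `x·v = u·y` and `(x + ei)·(v + ej) = u·y`). -/
theorem moebius_cipher_complete_mixed_coordinate (F : Type*) [Field F] [Fintype F]
    [CharP F 2] (hcard : 4 ≤ Fintype.card F) :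
    ∀ ei ej : F, ei ≠ 0 → ej ≠ 0 →
      ∃ x y u v : F, (x, y) ≠ (0, 0) ∧ (u, v) ≠ (0, 0) ∧
        (x + ei, y) ≠ ((0 : F), (0 : F)) ∧ (u, v + ej) ≠ ((0 : F), (0 : F)) ∧
        x * v = u * y ∧ (x + ei) * (v + ej) = u * y := by
  classical
  intro ei ej hei hej
  -- choose x outside {0, ei}
  have hx : ∃ x : F, x ≠ 0 ∧ x ≠ ei := by
    by_contra h
    push_neg at h
    have hsub : (Finset.univ : Finset F) ⊆ {0, ei} := by
      intro a _
      rcases eq_or_ne a 0 with h0 | h0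
      · simp [h0]
      · simp [h a h0]
    have h3 := Finset.card_le_card hsub
    rw [Finset.card_univ] at h3
    have h2 : ({0, ei} : Finset F).card ≤ 2 := Finset.card_insert_le _ _ |>.trans (by simp)
    omega
  obtain ⟨x, hx0, hxe⟩ := hx
  have hxei : x + ei ≠ 0 := by
    intro h
    apply hxe
    have h2 : (2 : F) = 0 := by exact_mod_cast CharP.cast_eq_zero F 2
    have : x = -ei := by linear_combination h
    rw [this, neg_eq_iff_add_eq_zero]
    linear_combination ei * h2
  set v : F := ej * (x + ei) / ei with hv
  refine ⟨x, v, x, v, ?_, ?_, ?_, ?_, rfl, ?_⟩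
  · simp [hx0]
  · simp [hx0]
  · simp [hxei]
  · simp [hx0]
  · have h2 : (2 : F) = 0 := by exact_mod_cast CharP.cast_eq_zero F 2
    field_simp [hv]
    ring_nf
    linear_combination (x * ej + ej * ei) * h2 + (x * ej + ej * ei) * mul_inv_cancel₀ hei
end
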